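/- Let μ be a probability measure on [0,1] with density ρ(x) proportional to x^{-α} for α ∈ (1/2,1). Then there exists a constant k > 0 such that for all sufficiently small r > 0, ∫ μ(B(x,r)) dμ(x) ≥ k·r^{2(1−α)}. -/

import Mathlib

open MeasureTheory Filter Metric Topology

/-- Correlation integral: `∫ μ(B(x,r)) dμ(x)`. -/
noncomputable def corrIntegral {X : Type*} [PseudoMetricSpace X] [MeasurableSpace X]
    (μ : Measure X) (r : ℝ) : ℝ :=
  ∫ x, (μ (ball x r)).toReal ∂μ

lemma measurable_measure_ball_real (μ : Measure ℝ) [IsFiniteMeasure μ] {r : ℝ} (hr : 0 < r) :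
    Measurable fun x => μ (ball x r) := by
  have h1 : Monotone fun x : ℝ => μ (Set.Iio (x + r)) := fun a b hab =>
    measure_mono (Set.Iio_subset_Iio (by linarith))
  have h2 : Monotone fun x : ℝ => μ (Set.Iic (x - r)) := fun a b hab =>
    measure_mono (Set.Iic_subset_Iic.2 (by linarith))
  have heq : ∀ x : ℝ, μ (ball x r) = μ (Set.Iio (x + r)) - μ (Set.Iic (x - r)) := by
    intro x
    rw [Real.ball_eq_Ioo, ← (show Set.Iio (x + r) \ Set.Iic (x - r) = Set.Ioo (x - r) (x + r) by
        ext y; simp [and_comm]),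
      measure_diff (Set.Iic_subset_Iio.2 (by linarith)) measurableSet_Iic.nullMeasurableSet
        (measure_ne_top μ _)]
  simp only [heq]
  exact h1.measurable.sub h2.measurable

/-- For the probability measure on `[0,1]` with density proportional to `x ^ (-α)`,
`α ∈ (1/2, 1)`, there is `k > 0` with `∫ μ(B(x,r)) dμ(x) ≥ k r^{2(1-α)}` for all small `r > 0`. -/
theorem correlation_integral_lower_bound (α c : ℝ)
    (hα : α ∈ Set.Ioo (1/2 : ℝ) 1) (hc : 0 < c)
    (μ : Measure ℝ)
    (hμ : μ = volume.withDensity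
      (fun x => ENNReal.ofReal (Set.indicator (Set.Icc (0:ℝ) 1) (fun x => c * x ^ (-α)) x)))
    (hprob : IsProbabilityMeasure μ) :
    ∃ K > (0:ℝ), ∃ r₀ > (0:ℝ), ∀ r : ℝ, 0 < r → r < r₀ →
      K * r ^ (2 * (1 - α)) ≤ corrIntegral μ r := by
  obtain ⟨hα1, hα2⟩ := hα
  refine ⟨c ^ 2, by positivity, 1, one_pos, fun r hr hr1 => ?_⟩
  -- the density
  set g : ℝ → ENNReal :=
    fun x => ENNReal.ofReal (Set.indicator (Set.Icc (0:ℝ) 1) (fun x => c * x ^ (-α)) x) with hg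
  have hgmeas : Measurable g := by
    apply Measurable.ennreal_ofReal
    exact (measurable_const.mul (measurable_id.pow_const (-α))).indicator measurableSet_Icc
  -- lower bound for μ (Ioo 0 r)
  have hrpow_pos : 0 < c * r ^ (1 - α) := by positivity
  have key : ENNReal.ofReal (c * r ^ (1 - α)) ≤ μ (Set.Ioo 0 r) := by
    rw [hμ, withDensity_apply _ measurableSet_Ioo]
    have h1 : ENNReal.ofReal (c * r ^ (1 - α))
        = ENNReal.ofReal (c * r ^ (-α)) * volume (Set.Ioo 0 r) := by
      rw [Real.volume_Ioo, sub_zero, ← ENNReal.ofReal_mul (by positivity)]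
      congr 1
      rw [mul_assoc]
      congr 1
      rw [show (1 : ℝ) - α = -α + 1 by ring, Real.rpow_add hr, Real.rpow_one]
    rw [h1, ← setLIntegral_const]
    refine setLIntegral_mono hgmeas fun x hx => ?_
    apply ENNReal.ofReal_le_ofReal
    have hx0 : 0 < x := hx.1
    have hxr : x < r := hx.2
    have hmem : x ∈ Set.Icc (0:ℝ) 1 := ⟨hx0.le, by linarith⟩
    rw [Set.indicator_of_mem hmem]
    exact mul_le_mul_of_nonneg_left
      (Real.rpow_le_rpow_of_nonpos hx0 hxr.le (by linarith)) hc.le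
  -- the integrand
  set f : ℝ → ℝ := fun x => (μ (ball x r)).toReal with hf
  have hfmeas : Measurable f := (measurable_measure_ball_real μ hr).ennreal_toReal
  have hfnonneg : ∀ x, 0 ≤ f x := fun x => ENNReal.toReal_nonneg
  have hfint : Integrable f μ := by
    refine Integrable.mono' (integrable_const (1 : ℝ)) hfmeas.aestronglyMeasurable
      (Filter.Eventually.of_forall fun x => ?_)
    rw [Real.norm_eq_abs, abs_of_nonneg (hfnonneg x)]
    have : μ (ball x r) ≤ 1 := prob_le_one
    calc (μ (ball x r)).toReal ≤ (1 : ENNReal).toReal :=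
          ENNReal.toReal_mono (by simp) this
      _ = 1 := by simp
  -- lower bound on f on Ioo 0 r
  have hball : ∀ x ∈ Set.Ioo (0:ℝ) r, c * r ^ (1 - α) ≤ f x := by
    intro x hx
    have hsub : Set.Ioo (0:ℝ) r ⊆ ball x r := by
      rw [Real.ball_eq_Ioo]
      exact Set.Ioo_subset_Ioo (by linarith [hx.1, hx.2]) (by linarith [hx.1, hx.2])
    have h1 : μ (Set.Ioo 0 r) ≤ μ (ball x r) := measure_mono hsub
    have h2 := key.trans h1
    calc c * r ^ (1 - α) = (ENNReal.ofReal (c * r ^ (1 - α))).toReal := by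
          rw [ENNReal.toReal_ofReal hrpow_pos.le]
      _ ≤ (μ (ball x r)).toReal := ENNReal.toReal_mono (measure_ne_top μ _) h2
  have hmIoo : c * r ^ (1 - α) ≤ (μ (Set.Ioo 0 r)).toReal := by
    calc c * r ^ (1 - α) = (ENNReal.ofReal (c * r ^ (1 - α))).toReal := by
          rw [ENNReal.toReal_ofReal hrpow_pos.le]
      _ ≤ _ := ENNReal.toReal_mono (measure_ne_top μ _) key
  -- put it together
  have step : (c * r ^ (1 - α)) * (μ (Set.Ioo 0 r)).toReal ≤ ∫ x in Set.Ioo 0 r, f x ∂μ :=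
    setIntegral_ge_of_const_le_real measurableSet_Ioo (measure_ne_top μ _) hball
      hfint.integrableOn
  have step2 : ∫ x in Set.Ioo 0 r, f x ∂μ ≤ ∫ x, f x ∂μ :=
    setIntegral_le_integral hfint (Filter.Eventually.of_forall hfnonneg)
  have hrw : c ^ 2 * r ^ (2 * (1 - α)) = (c * r ^ (1 - α)) * (c * r ^ (1 - α)) := by
    rw [show (2 : ℝ) * (1 - α) = (1 - α) + (1 - α) by ring, Real.rpow_add hr]
    ring
  calc c ^ 2 * r ^ (2 * (1 - α)) = (c * r ^ (1 - α)) * (c * r ^ (1 - α)) := hrw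
    _ ≤ (c * r ^ (1 - α)) * (μ (Set.Ioo 0 r)).toReal :=
        mul_le_mul_of_nonneg_left hmIoo hrpow_pos.le
    _ ≤ ∫ x in Set.Ioo 0 r, f x ∂μ := step
    _ ≤ ∫ x, f x ∂μ := step2
    _ = corrIntegral μ r := rfl
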